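/- (Clifford's theorem, module version) Let k be a field, G a group, N a normal subgroup of G, and V a finite-dimensional k[G]-module. If V is semisimple as a k[G]-module, then V is semisimple as a k[N]-module. -/

import Mathlib

section CliffordAux

variable {k G V : Type*} [Field k] [Group G] [AddCommGroup V] [Module k V]
  (N : Subgroup G) [N.Normal] (ρ : Representation k G V)

variable (k) in
/-- the restricted representation -/
abbrev cliffρ : Representation k ↥N V := ρ.comp N.subtype

/-- conjugation algebra map on the group algebra of `N` -/
noncomputable def cliffΦ (g : G) :
    MonoidAlgebra k ↥N →ₐ[k] MonoidAlgebra k ↥N :=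
  MonoidAlgebra.mapDomainAlgHom k k ((MulAut.conjNormal (H := N) g).toMonoidHom)

lemma cliff_conj_smul (g : G) (x : MonoidAlgebra k ↥N) (v : V) :
    (cliffρ k N ρ).asAlgebraHom x (ρ g v)
      = ρ g ((cliffρ k N ρ).asAlgebraHom (cliffΦ N g⁻¹ x) v) := by
  induction x using MonoidAlgebra.induction_on with
  | of n =>
      have h1 : (cliffρ k N ρ).asAlgebraHom (MonoidAlgebra.of k ↥N n) = ρ (n : G) :=
        Representation.asAlgebraHom_of _ n
      have h2 : cliffΦ N g⁻¹ (MonoidAlgebra.of k ↥N n)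
          = MonoidAlgebra.of k ↥N (MulAut.conjNormal (H := N) g⁻¹ n) := by
        simp [cliffΦ, MonoidAlgebra.of_apply, Finsupp.mapDomain_single]
      rw [h1, h2, Representation.asAlgebraHom_of]
      have h3 : ((MulAut.conjNormal (H := N) g⁻¹ n : ↥N) : G) = g⁻¹ * n * g := by
        rw [MulAut.conjNormal_apply]; group
      show (ρ ↑n) ((ρ g) v) = (ρ g) ((ρ ((MulAut.conjNormal (H := N) g⁻¹ n : ↥N) : G)) v)
      rw [h3, ← Module.End.mul_apply (ρ g), ← map_mul, ← Module.End.mul_apply, ← map_mul]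
      congr 2
      group
  | add f₁ f₂ hf₁ hf₂ =>
      simp only [map_add, LinearMap.add_apply, hf₁, hf₂]
  | smul r f hf =>
      simp only [map_smul, LinearMap.smul_apply, hf]

/-- each `ρ g` maps `k[N]`-submodules (for the restricted action) to `k[N]`-submodules -/
noncomputable def cliffMap (g : G)
    (q : Submodule (MonoidAlgebra k ↥N) (cliffρ k N ρ).asModule) :
    Submodule (MonoidAlgebra k ↥N) (cliffρ k N ρ).asModule where
  carrier := ρ g '' (q : Set ((cliffρ k N ρ).asModule))
  add_mem' := by
    rintro _ _ ⟨a, ha, rfl⟩ ⟨b, hb, rfl⟩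
    exact ⟨a + b, q.add_mem ha hb, map_add _ _ _⟩
  zero_mem' := ⟨0, q.zero_mem, map_zero _⟩
  smul_mem' := by
    rintro x _ ⟨a, ha, rfl⟩
    refine ⟨(cliffρ k N ρ).asAlgebraHom (cliffΦ N g⁻¹ x) a,
      q.smul_mem (cliffΦ N g⁻¹ x) ha, ?_⟩
    exact (cliff_conj_smul N ρ g x a).symm

lemma cliff_rho_inv_rho (g : G) (v : V) : ρ g⁻¹ (ρ g v) = v := by
  rw [← Module.End.mul_apply, ← map_mul, inv_mul_cancel, map_one, Module.End.one_apply]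

lemma cliffMap_cliffMap (g : G)
    (q : Submodule (MonoidAlgebra k ↥N) (cliffρ k N ρ).asModule) :
    cliffMap N ρ g⁻¹ (cliffMap N ρ g q) = q := by
  ext v
  constructor
  · rintro ⟨_, ⟨a, ha, rfl⟩, rfl⟩
    rwa [cliff_rho_inv_rho]
  · intro hv
    exact ⟨ρ g v, ⟨v, hv, rfl⟩, cliff_rho_inv_rho ρ g v⟩

lemma cliffMap_mono (g : G) :
    Monotone (cliffMap N ρ g) := by
  intro q q' hqq' v hv
  obtain ⟨a, ha, rfl⟩ := hv
  exact ⟨a, hqq' ha, rfl⟩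

/-- the order isomorphism on the lattice of `k[N]`-submodules induced by `ρ g` -/
noncomputable def cliffIso (g : G) :
    Submodule (MonoidAlgebra k ↥N) (cliffρ k N ρ).asModule ≃o
      Submodule (MonoidAlgebra k ↥N) (cliffρ k N ρ).asModule :=
  Equiv.toOrderIso
    { toFun := cliffMap N ρ g
      invFun := cliffMap N ρ g⁻¹
      left_inv := cliffMap_cliffMap N ρ g
      right_inv := fun q => by
        have := cliffMap_cliffMap N ρ g⁻¹ q
        rwa [inv_inv] at this }
    (cliffMap_mono N ρ g) (cliffMap_mono N ρ g⁻¹)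

omit [N.Normal] in
lemma cliff_ksmul_mem
    (q : Submodule (MonoidAlgebra k ↥N) (cliffρ k N ρ).asModule)
    {w : (cliffρ k N ρ).asModule} (hw : w ∈ q) (r : k) :
    (r • (w : V) : V) ∈ q := by
  have h : (r • (w : V) : V)
      = ((algebraMap k (MonoidAlgebra k ↥N) r) • w : (cliffρ k N ρ).asModule) := by
    show r • (w : V) = (cliffρ k N ρ).asAlgebraHom (algebraMap k (MonoidAlgebra k ↥N) r) w
    rw [AlgHom.commutes]; exact (Module.algebraMap_end_apply (S := k) (a := r) (m := (w : V))).symm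
  rw [h]
  exact q.smul_mem _ hw

omit [N.Normal] in
lemma cliff_ksmul_memG
    (q : Submodule (MonoidAlgebra k G) ρ.asModule)
    {w : ρ.asModule} (hw : w ∈ q) (r : k) :
    (r • (w : V) : V) ∈ q := by
  have h : (r • (w : V) : V)
      = ((algebraMap k (MonoidAlgebra k G) r) • w : ρ.asModule) := by
    show r • (w : V) = ρ.asAlgebraHom (algebraMap k (MonoidAlgebra k G) r) w
    rw [AlgHom.commutes]; exact (Module.algebraMap_end_apply (S := k) (a := r) (m := (w : V))).symm
  rw [h]
  exact q.smul_mem _ hw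

end CliffordAux

/-- Clifford's theorem, module version: if `N` is a normal subgroup of `G`
and `V` is a finite-dimensional `k[G]`-module which is semisimple, then `V` is semisimple
as a `k[N]`-module, via restriction along the inclusion. -/
theorem stmt4 {k G V : Type*} [Field k] [Group G] [AddCommGroup V] [Module k V]
    [FiniteDimensional k V] (N : Subgroup G) [N.Normal]
    (ρ : Representation k G V)
    (h : IsSemisimpleModule (MonoidAlgebra k G) ρ.asModule) :
    IsSemisimpleModule (MonoidAlgebra k ↥N)
      (Representation.asModule (ρ.comp N.subtype : Representation k ↥N V)) := by
  classical
  set A := MonoidAlgebra k ↥N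
  set M' := (cliffρ k N ρ).asModule
  -- well-foundedness / atomicity of the sublattice
  have hwf : WellFoundedLT (Submodule A M') := by
    let f : Submodule A M' → Submodule k V := fun q =>
      { carrier := show Set V from (q : Set M')
        add_mem' := fun ha hb => q.add_mem ha hb
        zero_mem' := q.zero_mem
        smul_mem' := fun r w hw => cliff_ksmul_mem N ρ q hw r }
    have hmono : StrictMono f := by
      intro q q' hqq'
      rcases lt_iff_le_not_ge.mp hqq' with ⟨hle, hnle⟩
      refine lt_iff_le_not_ge.mpr ⟨fun v hv => hle hv, fun hc => hnle fun v hv => hc hv⟩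
    exact hmono.wellFoundedLT
  have hatomic : IsAtomic (Submodule A M') :=
    isAtomic_of_orderBot_wellFounded_lt (hwf.wf)
  -- the socle
  set S : Submodule A M' := sSup { m : Submodule A M' | IsSimpleModule A m } with hS
  -- the socle is stable under each `ρ g`
  have hstab : ∀ g : G, cliffIso N ρ g S = S := by
    intro g
    have himg : (cliffIso N ρ g) '' { m : Submodule A M' | IsSimpleModule A m }
        = { m : Submodule A M' | IsSimpleModule A m } := by
      ext b
      simp only [Set.mem_image, Set.mem_setOf_eq]
      constructor
      · rintro ⟨a, ha, rfl⟩
        rw [Set.mem_setOf_eq, isSimpleModule_iff_isAtom] at ha ⊢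
        exact ((cliffIso N ρ g).isAtom_iff a).mpr ha
      · intro hb
        refine ⟨(cliffIso N ρ g).symm b, ?_, (cliffIso N ρ g).apply_symm_apply b⟩
        rw [Set.mem_setOf_eq, isSimpleModule_iff_isAtom] at hb ⊢
        have := ((cliffIso N ρ g).symm.isAtom_iff b).mpr hb
        exact this
    rw [hS, OrderIso.map_sSup, ← sSup_image, himg]
  have hstab' : ∀ (g : G) (v : V), v ∈ S → ρ g v ∈ S := by
    intro g v hv
    have : ρ g v ∈ cliffIso N ρ g S := ⟨v, hv, rfl⟩
    rwa [hstab g] at this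
  -- the socle as a `k[G]`-submodule
  let P : Submodule (MonoidAlgebra k G) ρ.asModule :=
    { carrier := show Set ρ.asModule from (S : Set M')
      add_mem' := fun ha hb => S.add_mem ha hb
      zero_mem' := S.zero_mem
      smul_mem' := by
        intro x v hv
        show ρ.asAlgebraHom x v ∈ S
        induction x using MonoidAlgebra.induction_on with
        | of g =>
            rw [Representation.asAlgebraHom_of]
            exact hstab' g v hv
        | add f₁ f₂ hf₁ hf₂ =>
            rw [map_add]
            exact S.add_mem hf₁ hf₂
        | smul r f hf =>
            rw [map_smul]
            exact cliff_ksmul_mem N ρ S hf r }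
  -- take a complement
  obtain ⟨Q, hPQ⟩ := exists_isCompl P
  -- the complement is also an `N`-submodule
  let Q' : Submodule A M' :=
    { carrier := show Set M' from (Q : Set ρ.asModule)
      add_mem' := fun ha hb => Q.add_mem ha hb
      zero_mem' := Q.zero_mem
      smul_mem' := by
        intro x v hv
        show (cliffρ k N ρ).asAlgebraHom x v ∈ Q
        induction x using MonoidAlgebra.induction_on with
        | of n =>
            rw [Representation.asAlgebraHom_of]
            have : ((MonoidAlgebra.of k G (n : G)) • (show ρ.asModule from v) : ρ.asModule) ∈ Q :=
              Q.smul_mem _ hv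
            have heq : ((MonoidAlgebra.of k G (n : G)) • (show ρ.asModule from v) : ρ.asModule)
                = ((cliffρ k N ρ) n) v := by
              show ρ.asAlgebraHom (MonoidAlgebra.of k G (n : G)) v = ρ (n : G) v
              rw [Representation.asAlgebraHom_of]
            rwa [heq] at this
        | add f₁ f₂ hf₁ hf₂ =>
            rw [map_add]
            exact Q.add_mem hf₁ hf₂
        | smul r f hf =>
            rw [map_smul]
            exact cliff_ksmul_memG ρ Q hf r }
  -- the complement must be trivial
  have hQ' : Q' = ⊥ := by
    rcases hatomic.eq_bot_or_exists_atom_le Q' with hbot | ⟨a, ha, haQ⟩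
    · exact hbot
    · exfalso
      have haS : a ≤ S := le_sSup (isSimpleModule_iff_isAtom.mpr ha)
      have : a ≤ ⊥ := by
        intro v hv
        have hv1 : v ∈ S := haS hv
        have hv2 : (show ρ.asModule from v) ∈ Q := haQ hv
        have : (show ρ.asModule from v) ∈ P ⊓ Q := ⟨hv1, hv2⟩
        rw [hPQ.inf_eq_bot] at this
        have h0 := (Submodule.mem_bot _).mp this
        exact (Submodule.mem_bot _).mpr h0
      exact ha.1 (le_bot_iff.mp this)
  -- hence the socle is everything
  have hQbot : Q = ⊥ := by
    ext v
    constructor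
    · intro hv
      have : v ∈ Q' := hv
      rw [hQ'] at this
      have h0 := (Submodule.mem_bot A (M := M')).mp this
      exact (Submodule.mem_bot _).mpr h0
    · intro hv
      simp only [Submodule.mem_bot] at hv
      rw [hv]; exact Q.zero_mem
  have hP : P = ⊤ := by
    have := hPQ.sup_eq_top
    rw [hQbot, sup_bot_eq] at this
    exact this
  have hStop : S = ⊤ := by
    ext v
    simp only [Submodule.mem_top, iff_true]
    have : (show ρ.asModule from v) ∈ P := hP ▸ Submodule.mem_top
    exact this
  exact IsSemisimpleModule.of_sSup_simples_eq_top hStop
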